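/- (Soundness) Every deducible sequent is valid: if A ⊢ s, then every interpretation that satisfies every formula in A satisfies s. -/

import Mathlib

namespace PTT


/-- Simple types over a single base type `B`. -/
inductive Ty : Type
  | base : Ty
  | arrow : Ty → Ty → Ty
deriving DecidableEq

/-- Names: the constants `⊥` and `→`, and variables (an index together with a type). -/
inductive Name : Type
  | bot : Name
  | imp : Name
  | var : ℕ → Ty → Name
deriving DecidableEq

/-- The type of a name. -/
def Name.ty : Name → Ty
  | .bot => .base
  | .imp => .arrow .base (.arrow .base .base)
  | .var _ σ => σ

/-- Terms: names, abstraction over a variable, application. -/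
inductive Tm : Type
  | name : Name → Tm
  | lam : ℕ → Ty → Tm → Tm
  | app : Tm → Tm → Tm
deriving DecidableEq

/-- The term `⊥`. -/
def botTm : Tm := .name .bot

/-- The variable `(n, σ)` as a term. -/
def vr (n : ℕ) (σ : Ty) : Tm := .name (.var n σ)

/-- Implication `s → t`. -/
def impTm (s t : Tm) : Tm := .app (.app (.name .imp) s) t

/-- `⊤ := ⊥ → ⊥`. -/
def topTm : Tm := impTm botTm botTm

/-- `¬ s := s → ⊥`. -/
def negTm (s : Tm) : Tm := impTm s botTm

/-- `s ∨ t := (s → t) → t`. -/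
def orTm (s t : Tm) : Tm := impTm (impTm s t) t

/-- `s ∧ t := ¬(¬s ∨ ¬t)`. -/
def andTm (s t : Tm) : Tm := negTm (orTm (negTm s) (negTm t))

/-- `s ≡ t := (s → t) ∧ (t → s)`. -/
def equivTm (s t : Tm) : Tm := andTm (impTm s t) (impTm t s)

/-- The typing relation. -/
inductive HasTy : Tm → Ty → Prop
  | name (x : Name) : HasTy (.name x) x.ty
  | lam {n σ s τ} : HasTy s τ → HasTy (.lam n σ s) (.arrow σ τ)
  | app {s t σ τ} : HasTy s (.arrow σ τ) → HasTy t σ → HasTy (.app s t) τ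

/-- Free variables of a term. -/
def fv : Tm → Finset (ℕ × Ty)
  | .name (.var n σ) => {(n, σ)}
  | .name _ => ∅
  | .lam n σ s => (fv s).erase (n, σ)
  | .app s t => fv s ∪ fv t

/-- A term is closed if it has no free variables. -/
def Closed (s : Tm) : Prop := fv s = ∅

/-- Capture-free parallel substitution (bound variables are renamed). -/
def substAux (ρ : ℕ × Ty → Tm) : Tm → Tm
  | .name (.var n σ) => ρ (n, σ)
  | .name x => .name x
  | .app s t => .app (substAux ρ s) (substAux ρ t)
  | .lam n σ s =>
      let used : Finset ℕ :=
        ((fv s).erase (n, σ)).biUnion (fun p => (fv (ρ p)).image Prod.fst)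
      let m : ℕ := used.sup id + 1
      .lam m σ (substAux (Function.update ρ (n, σ) (vr m σ)) s)

/-- Capture-free substitution `s[(n,σ) := t]`. -/
def subst (s : Tm) (n : ℕ) (σ : Ty) (t : Tm) : Tm :=
  substAux (Function.update (fun p => vr p.1 p.2) (n, σ) t) s

/-- Contexts: terms with exactly one hole (possibly under binders). -/
inductive Ctx : Type
  | hole : Ctx
  | lam : ℕ → Ty → Ctx → Ctx
  | appL : Ctx → Tm → Ctx
  | appR : Tm → Ctx → Ctx

/-- Filling the hole of a context with a term (capturing is allowed). -/
def Ctx.fill : Ctx → Tm → Tm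
  | .hole, s => s
  | .lam n σ C, s => .lam n σ (C.fill s)
  | .appL C t, s => .app (C.fill s) t
  | .appR t C, s => .app t (C.fill s)

/-- `C` captures the variable `p` if the hole of `C` lies below a binder for `p`. -/
def Ctx.captures : Ctx → ℕ × Ty → Prop
  | .hole, _ => False
  | .lam n σ C, p => p = (n, σ) ∨ C.captures p
  | .appL C _, p => C.captures p
  | .appR _ C, p => C.captures p

/-- `C` is admissible for `A` if it captures no variable free in `A`. -/
def Ctx.Admissible (C : Ctx) (A : Finset Tm) : Prop :=
  ∀ p ∈ A.biUnion fv, ¬ C.captures p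

/-- `s` is a subterm of `t`. -/
def Subterm (s t : Tm) : Prop := ∃ C : Ctx, C.fill s = t

/-- β-redexes. -/
def IsBetaRedex : Tm → Prop
  | .app (.lam _ _ _) _ => True
  | _ => False

/-- A term is β-normal if none of its subterms is a β-redex. -/
def BetaNormal (t : Tm) : Prop := ∀ s, Subterm s t → ¬ IsBetaRedex s

/-- Lambda equivalence: the least equivalence on well-typed terms containing
α-, β-, η-conversion and closed under arbitrary contexts. -/
inductive LamEq : Tm → Tm → Prop
  | refl {s σ} : HasTy s σ → LamEq s s
  | symm {s t} : LamEq s t → LamEq t s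
  | trans {s t u} : LamEq s t → LamEq t u → LamEq s u
  | alpha {n m σ s τ} : HasTy (.lam n σ s) τ → (m, σ) ∉ fv s →
      LamEq (.lam n σ s) (.lam m σ (subst s n σ (vr m σ)))
  | beta {n σ s t τ} : HasTy (.app (.lam n σ s) t) τ →
      LamEq (.app (.lam n σ s) t) (subst s n σ t)
  | eta {n σ s τ} : HasTy (.lam n σ (.app s (vr n σ))) τ → (n, σ) ∉ fv s →
      LamEq (.lam n σ (.app s (vr n σ))) s
  | ctx {s t σ} (C : Ctx) : LamEq s t → HasTy (C.fill s) σ → LamEq (C.fill s) (C.fill t)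

/-- The standard set-theoretic interpretation of types: `B` is interpreted as the
two truth values (`Bool`), functional types as full function spaces. -/
def Ty.sem : Ty → Type
  | .base => Bool
  | .arrow σ τ => σ.sem → τ.sem

def Ty.semDefault : (σ : Ty) → σ.sem
  | .base => false
  | .arrow _ τ => fun _ => τ.semDefault

instance (σ : Ty) : Inhabited σ.sem := ⟨σ.semDefault⟩

noncomputable instance Ty.semFintype : (σ : Ty) → Fintype σ.sem
  | .base => inferInstanceAs (Fintype Bool)
  | .arrow σ τ =>
      letI := Ty.semFintype σ
      letI := Ty.semFintype τ
      letI := Classical.decEq σ.sem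
      inferInstanceAs (Fintype (σ.sem → τ.sem))

def Ty.semCast {σ τ : Ty} (h : σ = τ) (v : σ.sem) : τ.sem := h ▸ v

/-- An interpretation assigns to every variable a value of the corresponding type
(the constants `⊥` and `→` have their values fixed). -/
def Interp : Type := ℕ → (σ : Ty) → σ.sem

def Interp.update (I : Interp) (n : ℕ) (σ : Ty) (v : σ.sem) : Interp :=
  fun m τ => if h : m = n ∧ τ = σ then Ty.semCast h.2.symm v else I m τ

/-- Type inference. -/
def typeOf : Tm → Option Ty
  | .name x => some x.ty
  | .lam _ σ s => (typeOf s).map (Ty.arrow σ)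
  | .app s t =>
      match typeOf s, typeOf t with
      | some (.arrow σ τ), some σ' => if σ = σ' then some τ else none
      | _, _ => none

/-- The canonical extension `Î` of an interpretation to all terms: `eval I s σ`
is the value of `s` at type `σ` (on well-typed terms this is the usual
denotation; junk default values are used at type mismatches). -/
def eval (I : Interp) : Tm → (σ : Ty) → σ.sem
  | .name (.var n τ), σ => if h : τ = σ then Ty.semCast h (I n τ) else default
  | .name .bot, σ =>
      match σ with
      | .base => false
      | _ => default
  | .name .imp, σ =>
      match σ with
      | .arrow .base (.arrow .base .base) => fun a b => !a || b
      | _ => default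
  | .app s t, σ =>
      match typeOf t with
      | some τ => eval I s (.arrow τ σ) (eval I t τ)
      | none => default
  | .lam n τ s, σ =>
      match σ with
      | .base => default
      | .arrow σ₁ σ₂ =>
          if h : σ₁ = τ then
            fun a => eval (I.update n τ (Ty.semCast h a)) s σ₂
          else default

/-- `I` satisfies the formula `s` if `Î s = 1`. -/
def Satisfies (I : Interp) (s : Tm) : Prop := eval I s .base = true

/-- A formula is valid if every interpretation satisfies it. -/
def ValidFml (s : Tm) : Prop := ∀ I : Interp, Satisfies I s

/-- A sequent `A ⇒ s` is valid if every interpretation satisfying `A` satisfies `s`. -/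
def ValidSeq (A : Finset Tm) (s : Tm) : Prop :=
  ∀ I : Interp, (∀ t ∈ A, Satisfies I t) → Satisfies I s

/-- Finite disjunction (the empty disjunction is `⊥`). -/
def orList : List Tm → Tm
  | [] => botTm
  | [s] => s
  | s :: l => orTm s (orList l)

/-- Finite conjunction (the empty conjunction is `⊤`). -/
def andList : List Tm → Tm
  | [] => topTm
  | [s] => s
  | s :: l => andTm s (andList l)

/-- The argument types of a type (every type has the form `σ₁…σₙB`). -/
def Ty.args : Ty → List Ty
  | .base => []
  | .arrow σ τ => σ :: τ.args

/-- Tuples of values along a list of types. -/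
def Tup : List Ty → Type
  | [] => PUnit
  | σ :: l => σ.sem × Tup l

noncomputable instance TupFintype : (l : List Ty) → Fintype (Tup l)
  | [] => inferInstanceAs (Fintype PUnit)
  | σ :: l =>
      letI := TupFintype l
      inferInstanceAs (Fintype (σ.sem × Tup l))

/-- Applying a function value to a tuple of arguments (the result type is `B`). -/
def Ty.applyTup : (σ : Ty) → σ.sem → Tup σ.args → Bool
  | .base, a, _ => a
  | .arrow _ τ, f, p => τ.applyTup (f p.1) p.2

/-- Quote/identity data for each type in a list: a quote function and the term `≐`. -/
def ArgData : List Ty → Type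
  | [] => PUnit
  | σ :: l => ((σ.sem → Tm) × Tm) × ArgData l

/-- The conjunction list `x_k ≐_{σ_k} (↓_{σ_k} b_k), …` for a tuple `b`. -/
def eqConj : (l : List Ty) → ArgData l → ℕ → Tup l → List Tm
  | [], _, _, _ => []
  | σ :: l, (d, ds), k, (b, bs) =>
      (.app (.app d.2 (vr k σ)) (d.1 b)) :: eqConj l ds (k + 1) bs

/-- `λ x_k : σ_k. …` binding one variable for each type in the list. -/
def mkLams : (l : List Ty) → ℕ → Tm → Tm
  | [], _, body => body
  | σ :: l, k, body => .lam k σ (mkLams l (k + 1) body)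

/-- The body of the quote term
`↓_{σ₁…σₙB} a := λx₁…xₙ. ⋁_{b₁…bₙ, a b₁…bₙ = 1} ⋀_j x_j ≐_{σ_j} (↓_{σ_j} b_j)`. -/
noncomputable def quoteBodyAux (σ : Ty) (ad : ArgData σ.args) (a : σ.sem) : Tm :=
  mkLams σ.args 0 (orList
    ((((Finset.univ : Finset (Tup σ.args)).toList.filter
        (fun b => σ.applyTup a b))).map
      (fun b => andList (eqConj σ.args ad 0 b))))

/-- `∀σ := λf. ⋀_{a ∈ Bσ} f (↓σ a)`, given the quote function for `σ`. -/
noncomputable def allTmAux (σ : Ty) (q : σ.sem → Tm) : Tm :=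
  .lam 0 (.arrow σ .base)
    (andList (((Finset.univ : Finset σ.sem).toList).map
      (fun a => .app (vr 0 (.arrow σ .base)) (q a))))

mutual
  /-- The quote function `↓σ` together with the identity term `≐σ`. -/
  noncomputable def quoteEq : (σ : Ty) → ((σ.sem → Tm) × Tm)
    | .base =>
        (fun a => quoteBodyAux .base PUnit.unit a,
         .lam 0 .base (.lam 1 .base (equivTm (vr 0 .base) (vr 1 .base))))
    | .arrow σ τ =>
        (fun a => quoteBodyAux (.arrow σ τ) ((quoteEq σ, argData τ) : ArgData (σ :: τ.args)) a,
         .lam 0 (.arrow σ τ) (.lam 1 (.arrow σ τ)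
           (.app (allTmAux σ (quoteEq σ).1)
             (.lam 2 σ
               (.app (.app (quoteEq τ).2
                  (.app (vr 0 (.arrow σ τ)) (vr 2 σ)))
                (.app (vr 1 (.arrow σ τ)) (vr 2 σ)))))))
  /-- Quote/identity data for all argument types of a type. -/
  noncomputable def argData : (σ : Ty) → ArgData σ.args
    | .base => PUnit.unit
    | .arrow σ τ => ((quoteEq σ, argData τ) : ArgData (σ :: τ.args))
end

/-- The quote function `↓σ : Bσ → Λ`. -/
noncomputable def quote (σ : Ty) (a : σ.sem) : Tm := (quoteEq σ).1 a

/-- The term `≐σ : σσB` denoting the identity predicate on `Bσ`. -/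
noncomputable def eqTm (σ : Ty) : Tm := (quoteEq σ).2

/-- The term `∀σ : (σB)B`. -/
noncomputable def allTm (σ : Ty) : Tm := allTmAux σ (quote σ)


/-- Propositional formulas: `s ::= x | ⊥ | s → s` with `x` a variable of type `B`. -/
inductive Propositional : Tm → Prop
  | var (n : ℕ) : Propositional (vr n .base)
  | bot : Propositional botTm
  | imp {s t} : Propositional s → Propositional t → Propositional (impTm s t)

/-- A type-respecting substitution of terms for variables. -/
def IsSubstitution (ρ : ℕ × Ty → Tm) : Prop := ∀ n σ, HasTy (ρ (n, σ)) σ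

/-- A formula is tautologous if it is a substitution instance of a tautology
(a valid propositional formula). -/
def Tautologous (s : Tm) : Prop :=
  ∃ t ρ, Propositional t ∧ ValidFml t ∧ IsSubstitution ρ ∧ s = substAux ρ t

/-- The proof system: Triv, Weak, Ded, MP, DN, Lam and Boolean replacement (BR).
Sequents consist of a finite set of formulas and a formula. -/
inductive Ded : Finset Tm → Tm → Prop
  | triv {A s} : (∀ t ∈ A, HasTy t .base) → HasTy s .base → Ded (insert s A) s
  | weak {A s t} : HasTy s .base → Ded A t → Ded (insert s A) t
  | ded {A s t} : Ded (insert s A) t → Ded A (impTm s t)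
  | mp {A s t} : Ded A (impTm s t) → Ded A s → Ded A t
  | dn {A s} : Ded A (negTm (negTm s)) → Ded A s
  | lam {A s t} : Ded A s → LamEq s t → HasTy t .base → Ded A t
  | br {A s t} (C : Ctx) : C.Admissible A → Ded A (equivTm s t) →
      Ded A (C.fill s) → HasTy (C.fill t) .base → Ded A (C.fill t)


section SoundnessLemmas

theorem eval_var' (I : Interp) n τ σ : eval I (.name (.var n τ)) σ = if h : τ = σ then Ty.semCast h (I n τ) else default := rfl
theorem eval_app' (I : Interp) s t σ : eval I (.app s t) σ = (match typeOf t with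
      | some τ => eval I s (.arrow τ σ) (eval I t τ)
      | none => default) := rfl
theorem eval_lam' (I : Interp) n τ s σ₁ σ₂ : eval I (.lam n τ s) (.arrow σ₁ σ₂) = if h : σ₁ = τ then
              fun a => eval (I.update n τ (Ty.semCast h a)) s σ₂
            else default := rfl
theorem eval_impc (I : Interp) : eval I (.name .imp) (.arrow .base (.arrow .base .base)) = fun a b => !a || b := rfl
theorem eval_var'' (I : ℕ → (σ : Ty) → σ.sem) n τ σ : eval I (.name (.var n τ)) σ = if h : τ = σ then Ty.semCast h (I n τ) else default := rfl
theorem eval_app'' (I : ℕ → (σ : Ty) → σ.sem) s t σ : eval I (.app s t) σ = (match typeOf t with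
      | some τ => eval I s (.arrow τ σ) (eval I t τ)
      | none => default) := rfl
theorem eval_lam'' (I : ℕ → (σ : Ty) → σ.sem) n τ s σ₁ σ₂ : eval I (.lam n τ s) (.arrow σ₁ σ₂) = if h : σ₁ = τ then
              fun a => eval (Interp.update I n τ (Ty.semCast h a)) s σ₂
            else default := rfl

lemma Ty.semCast_rfl {σ : Ty} (h : σ = σ) (v : σ.sem) : Ty.semCast h v = v := rfl

lemma Interp.update_same (I : Interp) (n : ℕ) (σ : Ty) (v : σ.sem) :
    I.update n σ v n σ = v := by
  show (if h : n = n ∧ σ = σ then Ty.semCast h.2.symm v else I n σ) = v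
  rw [dif_pos ⟨rfl, rfl⟩]
  rfl

lemma Interp.update_ne (I : Interp) {n : ℕ} {σ : Ty} {m : ℕ} {τ : Ty}
    (h : ¬ (m = n ∧ τ = σ)) (v : σ.sem) : I.update n σ v m τ = I m τ := by
  show (if h : m = n ∧ τ = σ then Ty.semCast h.2.symm v else I m τ) = I m τ
  rw [dif_neg h]

lemma typeOf_of_hasTy : ∀ {s σ}, HasTy s σ → typeOf s = some σ := by
  intro s σ h
  induction h with
  | name x => rfl
  | lam h ih => simp [typeOf, ih]
  | app h1 h2 ih1 ih2 => simp [typeOf, ih1, ih2]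

lemma hasTy_of_typeOf : ∀ {s σ}, typeOf s = some σ → HasTy s σ := by
  intro s
  induction s with
  | name x =>
      intro σ h
      simp only [typeOf, Option.some.injEq] at h
      exact h ▸ HasTy.name x
  | lam n τ s ih =>
      intro σ h
      simp only [typeOf, Option.map_eq_some_iff] at h
      obtain ⟨τ', hτ', rfl⟩ := h
      exact HasTy.lam (ih hτ')
  | app s t ihs iht =>
      intro σ h
      simp only [typeOf] at h
      split at h
      · next σ₁ τ₁ σ' hs ht =>
          split at h
          · next heq =>
              injection h with h
              subst h; subst heq
              exact HasTy.app (ihs hs) (iht ht)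
          · exact absurd h (by simp)
      · exact absurd h (by simp)

lemma eval_wrong : ∀ {s τ}, HasTy s τ → ∀ (I : Interp) (σ : Ty), σ ≠ τ → eval I s σ = default := by
  intro s τ h
  induction h with
  | name x =>
      intro I σ hσ
      cases x with
      | var n τ' =>
          simp only [Name.ty] at hσ
          simp [eval_var', Ne.symm hσ]
      | bot =>
          simp only [Name.ty] at hσ
          cases σ with
          | base => exact absurd rfl hσ
          | arrow _ _ => rfl
      | imp =>
          simp only [Name.ty] at hσ
          rcases σ with _ | ⟨_ | ⟨a, b⟩, _ | ⟨_ | ⟨c, d⟩, _ | ⟨e, f⟩⟩⟩ <;>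
            first | rfl | exact absurd rfl hσ
  | @app s t σ₀ τ h1 h2 ih1 ih2 =>
      intro I σ hσ
      simp only [eval_app', typeOf_of_hasTy h2]
      rw [ih1 I _ (fun hc => hσ (by injection hc))]
      rfl
  | @lam n σ₀ s τ h ih =>
      intro I σ hσ
      cases σ with
      | base => rfl
      | arrow σ₁ σ₂ =>
          simp only [eval_lam']
          by_cases hc : σ₁ = σ₀
          · subst hc
            rw [dif_pos rfl]
            have hσ₂ : σ₂ ≠ τ := fun hh => hσ (by rw [hh])
            funext a
            exact ih _ _ hσ₂
          · rw [dif_neg hc]; rfl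

lemma eval_congr : ∀ (s : Tm) {I J : Interp},
    (∀ p ∈ fv s, I p.1 p.2 = J p.1 p.2) → ∀ σ, eval I s σ = eval J s σ := by
  intro s
  induction s with
  | name x =>
      intro I J h σ
      cases x with
      | var n τ =>
          have := h (n, τ) (by simp [fv])
          simp only [eval_var', this]
      | bot => rfl
      | imp => rfl
  | app s t ihs iht =>
      intro I J h σ
      have hs : ∀ p ∈ fv s, I p.1 p.2 = J p.1 p.2 := fun p hp => h p (by simp [fv, hp])
      have ht : ∀ p ∈ fv t, I p.1 p.2 = J p.1 p.2 := fun p hp => h p (by simp [fv, hp])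
      simp only [eval_app']
      cases typeOf t with
      | none => rfl
      | some τ => simp only [ihs hs, iht ht]
  | lam n τ s ih =>
      intro I J h σ
      cases σ with
      | base => rfl
      | arrow σ₁ σ₂ =>
          simp only [eval_lam']
          by_cases hc : σ₁ = τ
          · subst hc
            rw [dif_pos rfl, dif_pos rfl]
            funext a
            apply ih
            intro p hp
            by_cases hpn : p = (n, σ₁)
            · subst hpn; rw [Interp.update_same, Interp.update_same]
            · rw [Interp.update_ne _ (fun hc2 => hpn (Prod.ext hc2.1 hc2.2)),
                  Interp.update_ne _ (fun hc2 => hpn (Prod.ext hc2.1 hc2.2))]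
              exact h p (Finset.mem_erase.2 ⟨hpn, hp⟩)
          · rw [dif_neg hc, dif_neg hc]

/-- Type-preserving substitutions (stated via `typeOf`). -/
def GoodSub (ρ : ℕ × Ty → Tm) : Prop := ∀ n τ, typeOf (ρ (n, τ)) = some τ

lemma goodSub_update {ρ} (h : GoodSub ρ) (n : ℕ) (σ : Ty) (t : Tm)
    (ht : typeOf t = some σ) : GoodSub (Function.update ρ (n, σ) t) := by
  intro k τ
  rcases eq_or_ne (k, τ) (n, σ) with he | he
  · injection he with h1 h2; subst h1; subst h2
    rw [Function.update_self]; exact ht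
  · rw [Function.update_of_ne he]; exact h k τ

lemma goodSub_update_vr {ρ} (h : GoodSub ρ) (n : ℕ) (σ : Ty) (m : ℕ) :
    GoodSub (Function.update ρ (n, σ) (vr m σ)) := goodSub_update h n σ (vr m σ) rfl

lemma typeOf_substAux : ∀ (s : Tm) {ρ}, GoodSub ρ → typeOf (substAux ρ s) = typeOf s := by
  intro s
  induction s with
  | name x =>
      intro ρ h
      cases x with
      | var n τ => exact h n τ
      | bot => rfl
      | imp => rfl
  | app s t ihs iht =>
      intro ρ h
      simp only [substAux, typeOf, ihs h, iht h]
  | lam n σ s ih =>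
      intro ρ h
      simp only [substAux, typeOf]
      rw [ih (goodSub_update_vr h _ _ _)]

lemma fresh_notin {ρ : ℕ × Ty → Tm} {F : Finset (ℕ × Ty)} {p : ℕ × Ty} (hp : p ∈ F) (τ : Ty) :
    ((((F.biUnion fun q => (fv (ρ q)).image Prod.fst).sup id) + 1, τ)) ∉ fv (ρ p) := by
  intro hmem
  have h1 : ((F.biUnion fun q => (fv (ρ q)).image Prod.fst).sup id) + 1 ∈
      F.biUnion fun q => (fv (ρ q)).image Prod.fst :=
    Finset.mem_biUnion.2 ⟨p, hp, Finset.mem_image.2 ⟨_, hmem, rfl⟩⟩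
  have h2 := Finset.le_sup (f := id) h1
  simp only [id] at h2
  omega

lemma eval_substAux : ∀ (s : Tm) (ρ : ℕ × Ty → Tm), GoodSub ρ → ∀ (I : Interp) (σ : Ty),
    eval I (substAux ρ s) σ = eval (fun k τ => eval I (ρ (k, τ)) τ) s σ := by
  intro s
  induction s with
  | name x =>
      intro ρ h I σ
      cases x with
      | var n τ =>
          show eval I (ρ (n, τ)) σ = _
          simp only [eval_var', eval_var'']
          by_cases hc : τ = σ
          · subst hc; rw [dif_pos rfl]; rfl
          · rw [dif_neg hc, eval_wrong (hasTy_of_typeOf (h n τ)) I σ (Ne.symm (Ne.symm (fun he => hc he.symm)))]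
      | bot => rfl
      | imp => rfl
  | app s t ihs iht =>
      intro ρ h I σ
      simp only [substAux, eval_app', eval_app'']
      rw [typeOf_substAux t h]
      cases typeOf t with
      | none => rfl
      | some τ => simp only [ihs ρ h, iht ρ h]
  | lam n σ₀ s ih =>
      intro ρ h I σ
      simp only [substAux]
      cases σ with
      | base => rfl
      | arrow σ₁ σ₂ =>
          simp only [eval_lam', eval_lam'']
          by_cases hc : σ₁ = σ₀
          · subst hc
            rw [dif_pos rfl, dif_pos rfl]
            funext a
            set F := (fv s).erase (n, σ₁) with hF
            set M := ((F.biUnion fun q => (fv (ρ q)).image Prod.fst).sup id) + 1 with hM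
            rw [ih _ (goodSub_update_vr h n σ₁ M)]
            apply eval_congr
            intro p hp
            by_cases hpn : p = (n, σ₁)
            · subst hpn
              show eval _ (Function.update ρ (n, σ₁) (vr M σ₁) (n, σ₁)) σ₁ = _
              rw [Function.update_self]
              show eval _ (.name (.var M σ₁)) σ₁ = _
              simp only [eval_var']
              rw [dif_pos trivial, Interp.update_same, Interp.update_same (fun k τ => eval I (ρ (k, τ)) τ)]
              rfl
            · show eval _ (Function.update ρ (n, σ₁) (vr M σ₁) (p.1, p.2)) p.2 = _
              rw [show ((p.1, p.2) : ℕ × Ty) = p from rfl, Function.update_of_ne hpn]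
              have hfresh : ((M, σ₁)) ∉ fv (ρ p) :=
                fresh_notin (F := F) (Finset.mem_erase.2 ⟨hpn, hp⟩) σ₁
              have heq : eval (I.update M σ₁ (Ty.semCast rfl a)) (ρ p) p.2
                  = eval I (ρ p) p.2 := by
                apply eval_congr
                intro q hq
                apply Interp.update_ne
                intro hq2
                exact hfresh (by rw [show ((M, σ₁) : ℕ × Ty) = q from (Prod.ext hq2.1 hq2.2).symm]; exact hq)
              rw [heq, Interp.update_ne (fun k τ => eval I (ρ (k, τ)) τ) (fun hp2 => hpn (Prod.ext hp2.1 hp2.2))]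
          · rw [dif_neg hc, dif_neg hc]

end SoundnessLemmas
section LamEqSoundness

lemma hasTy_lam_inv {n σ s τ'} (h : HasTy (.lam n σ s) τ') :
    ∃ τ, τ' = .arrow σ τ ∧ HasTy s τ := by
  cases h with | lam h => exact ⟨_, rfl, h⟩

lemma hasTy_app_inv {s t τ} (h : HasTy (.app s t) τ) :
    ∃ σ, HasTy s (.arrow σ τ) ∧ HasTy t σ := by
  cases h with | app h1 h2 => exact ⟨_, h1, h2⟩

lemma ctx_fill_typeOf (C : Ctx) {s t : Tm} (h : typeOf s = typeOf t) :
    typeOf (C.fill s) = typeOf (C.fill t) := by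
  induction C with
  | hole => exact h
  | lam n σ C ih => simp only [Ctx.fill, typeOf, ih]
  | appL C u ih => simp only [Ctx.fill, typeOf, ih]
  | appR u C ih => simp only [Ctx.fill, typeOf, ih]

lemma ctx_fill_eval (C : Ctx) {s t : Tm} (hty : typeOf s = typeOf t)
    (h : ∀ I σ, eval I s σ = eval I t σ) :
    ∀ I σ, eval I (C.fill s) σ = eval I (C.fill t) σ := by
  induction C with
  | hole => exact h
  | lam n τ C ih =>
      intro I σ
      cases σ with
      | base => rfl
      | arrow σ₁ σ₂ =>
          simp only [Ctx.fill, eval_lam']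
          by_cases hc : σ₁ = τ
          · subst hc
            rw [dif_pos rfl, dif_pos rfl]
            funext a
            exact ih _ _
          · rw [dif_neg hc, dif_neg hc]
  | appL C u ih =>
      intro I σ
      simp only [Ctx.fill, eval_app']
      cases typeOf u with
      | none => rfl
      | some τ => simp only [ih I (.arrow τ σ)]
  | appR u C ih =>
      intro I σ
      simp only [Ctx.fill, eval_app']
      rw [ctx_fill_typeOf C hty]
      cases typeOf (C.fill t) with
      | none => rfl
      | some τ => simp only [ih I τ]

lemma lamEq_sound {s t : Tm} (h : LamEq s t) :
    typeOf s = typeOf t ∧ ∀ I σ, eval I s σ = eval I t σ := by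
  induction h with
  | refl _ => exact ⟨rfl, fun _ _ => rfl⟩
  | symm _ ih => exact ⟨ih.1.symm, fun I σ => (ih.2 I σ).symm⟩
  | trans _ _ ih1 ih2 => exact ⟨ih1.1.trans ih2.1, fun I σ => (ih1.2 I σ).trans (ih2.2 I σ)⟩
  | @alpha n m σ s τ' hty hm =>
      obtain ⟨τ, he, hs⟩ := hasTy_lam_inv hty
      have hρ : GoodSub (Function.update (fun p => vr p.1 p.2) (n, σ) (vr m σ)) :=
        goodSub_update_vr (ρ := fun p => vr p.1 p.2) (fun _ _ => rfl) n σ m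
      constructor
      · simp only [typeOf, subst]
        rw [typeOf_substAux s hρ]
      · intro I ς
        cases ς with
        | base => rfl
        | arrow ς₁ ς₂ =>
            simp only [eval_lam']
            by_cases hc : ς₁ = σ
            · subst hc
              rw [dif_pos rfl, dif_pos rfl]
              funext a
              rw [subst, eval_substAux s _ hρ]
              apply eval_congr
              intro p hp
              by_cases hpn : p = (n, ς₁)
              · subst hpn
                show Interp.update I n ς₁ _ n ς₁ =
                  eval _ (Function.update (fun p => vr p.1 p.2) (n, ς₁) (vr m ς₁) (n, ς₁)) ς₁
                rw [Interp.update_same, Function.update_self]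
                show _ = eval _ (.name (.var m ς₁)) ς₁
                simp only [eval_var']
                rw [dif_pos trivial, Interp.update_same]
                rfl
              · have hpm : p ≠ (m, ς₁) := fun he2 => hm (he2 ▸ hp)
                show Interp.update I n ς₁ _ p.1 p.2 =
                  eval _ (Function.update (fun p => vr p.1 p.2) (n, ς₁) (vr m ς₁) (p.1, p.2)) p.2
                rw [Interp.update_ne _ (fun hc2 => hpn (Prod.ext hc2.1 hc2.2)),
                  show ((p.1, p.2) : ℕ × Ty) = p from rfl, Function.update_of_ne hpn]
                show _ = eval _ (.name (.var p.1 p.2)) p.2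
                simp only [eval_var']
                rw [dif_pos trivial, Interp.update_ne _ (fun hc2 => hpm (Prod.ext hc2.1 hc2.2))]
                rfl
            · rw [dif_neg hc, dif_neg hc]
  | @beta n σ s t τ' hty =>
      obtain ⟨σ', h1, h2⟩ := hasTy_app_inv hty
      obtain ⟨τ, he, hs⟩ := hasTy_lam_inv h1
      injection he with he1 he2
      obtain rfl := he1.symm
      obtain rfl := he2
      have hρ : GoodSub (Function.update (fun p => vr p.1 p.2) (n, σ) t) :=
        goodSub_update (ρ := fun p => vr p.1 p.2) (fun _ _ => rfl) n σ t (typeOf_of_hasTy h2)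
      constructor
      · rw [subst, typeOf_substAux s hρ, typeOf_of_hasTy hty, typeOf_of_hasTy hs]
      · intro I ς
        simp only [eval_app', eval_lam', typeOf_of_hasTy h2]
        rw [dif_pos trivial]
        rw [subst, eval_substAux s _ hρ]
        apply eval_congr
        intro p hp
        by_cases hpn : p = (n, σ)
        · subst hpn
          show Interp.update I n σ _ n σ =
            eval I (Function.update (fun p => vr p.1 p.2) (n, σ) t (n, σ)) σ
          rw [Interp.update_same, Function.update_self]
          rfl
        · show Interp.update I n σ _ p.1 p.2 =
            eval I (Function.update (fun p => vr p.1 p.2) (n, σ) t (p.1, p.2)) p.2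
          rw [Interp.update_ne _ (fun hc2 => hpn (Prod.ext hc2.1 hc2.2)),
            show ((p.1, p.2) : ℕ × Ty) = p from rfl, Function.update_of_ne hpn]
          show _ = eval I (.name (.var p.1 p.2)) p.2
          simp only [eval_var']
          rw [dif_pos trivial]
          rfl
  | @eta n σ s τ' hty hn =>
      obtain ⟨τ, he, hs0⟩ := hasTy_lam_inv hty
      obtain ⟨σ'', hs, hv⟩ := hasTy_app_inv hs0
      have hσ'' : σ = σ'' := by cases hv; rfl
      obtain rfl := hσ''
      subst he
      constructor
      · rw [typeOf_of_hasTy hty, typeOf_of_hasTy hs]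
      · intro I ς
        cases ς with
        | base => rw [eval_wrong hty I _ (by simp), eval_wrong hs I _ (by simp)]
        | arrow ς₁ ς₂ =>
            by_cases hc : ς₁ = σ
            · subst hc
              by_cases hc2 : ς₂ = τ
              · subst hc2
                simp only [eval_lam']
                rw [dif_pos trivial]
                funext a
                show eval (I.update n ς₁ (Ty.semCast rfl a)) s (ς₁.arrow ς₂)
                    (if h : ς₁ = ς₁ then Ty.semCast h
                      (I.update n ς₁ (Ty.semCast rfl a) n ς₁) else default)
                  = eval I s (ς₁.arrow ς₂) a
                rw [dif_pos rfl]
                simp only [Ty.semCast_rfl]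
                rw [Interp.update_same]
                rw [eval_congr s (I := I.update n ς₁ a) (J := I)
                  (fun p hp => Interp.update_ne _
                    (fun hc2 => hn (by rw [show ((n, ς₁) : ℕ × Ty) = p from (Prod.ext hc2.1 hc2.2).symm]; exact hp)) _)
                  (ς₁.arrow ς₂)]
              · have h1 : Ty.arrow ς₁ ς₂ ≠ Ty.arrow ς₁ τ := fun hh => hc2 (by injection hh)
                rw [eval_wrong hty I _ h1, eval_wrong hs I _ h1]
            · have h1 : Ty.arrow ς₁ ς₂ ≠ Ty.arrow σ τ := fun hh => hc (by injection hh)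
              rw [eval_wrong hty I _ h1, eval_wrong hs I _ h1]
  | @ctx s t σ' C _ _ ih => exact ⟨ctx_fill_typeOf C ih.1, ctx_fill_eval C ih.1 ih.2⟩

end LamEqSoundness
section Connectives

lemma typeOf_bot : typeOf botTm = some .base := rfl

lemma eval_bot (I : Interp) : eval I botTm .base = false := rfl

lemma typeOf_imp {s t} (hs : typeOf s = some .base) (ht : typeOf t = some .base) :
    typeOf (impTm s t) = some .base := by
  simp [impTm, typeOf, hs, ht, Name.ty]

lemma eval_imp {s t} (hs : typeOf s = some .base) (ht : typeOf t = some .base) (I : Interp) :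
    eval I (impTm s t) .base = (!eval I s .base || eval I t .base) := by
  show eval I (.app (.app (.name .imp) s) t) .base = _
  simp only [eval_app', eval_impc, hs, ht]; rfl

lemma hasTy_imp {s t} (hs : HasTy s .base) (ht : HasTy t .base) : HasTy (impTm s t) .base :=
  HasTy.app (HasTy.app (HasTy.name .imp) hs) ht

lemma hasTy_imp_inv {s t} (h : HasTy (impTm s t) .base) : HasTy s .base ∧ HasTy t .base := by
  obtain ⟨σ, h1, h2⟩ := hasTy_app_inv h
  obtain ⟨σ', h3, h4⟩ := hasTy_app_inv h1
  cases h3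
  exact ⟨h4, h2⟩

lemma hasTy_equiv_inv {s t} (h : HasTy (equivTm s t) .base) :
    HasTy s .base ∧ HasTy t .base := by
  simp only [equivTm, andTm, orTm, negTm] at h
  have h1 := (hasTy_imp_inv h).1
  have hu := (hasTy_imp_inv (hasTy_imp_inv (hasTy_imp_inv h1).1).1).1
  exact ⟨(hasTy_imp_inv hu).1, (hasTy_imp_inv hu).2⟩

lemma eval_equiv {s t} (hs : HasTy s .base) (ht : HasTy t .base) {I : Interp}
    (h : Satisfies I (equivTm s t)) : eval I s .base = eval I t .base := by
  have hs' := typeOf_of_hasTy hs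
  have ht' := typeOf_of_hasTy ht
  have tu : typeOf (impTm s t) = some .base := typeOf_imp hs' ht'
  have tv : typeOf (impTm t s) = some .base := typeOf_imp ht' hs'
  have tnu : typeOf (impTm (impTm s t) botTm) = some .base := typeOf_imp tu typeOf_bot
  have tnv : typeOf (impTm (impTm t s) botTm) = some .base := typeOf_imp tv typeOf_bot
  have timp : typeOf (impTm (impTm (impTm s t) botTm) (impTm (impTm t s) botTm)) = some .base :=
    typeOf_imp tnu tnv
  simp only [Satisfies, equivTm, andTm, orTm, negTm] at h
  rw [eval_imp (typeOf_imp timp tnv) typeOf_bot, eval_imp timp tnv,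
    eval_imp tnu tnv, eval_imp tu typeOf_bot, eval_imp tv typeOf_bot,
    eval_imp hs' ht', eval_imp ht' hs', eval_bot] at h
  cases h1 : eval I s .base <;> cases h2 : eval I t .base <;> simp_all <;> rfl

end Connectives

section BR

lemma br_aux {s t : Tm} (hs : HasTy s .base) (ht : HasTy t .base)
    (Cap : ℕ × Ty → Prop) (I : Interp)
    (key : ∀ J : Interp, (∀ p, ¬ Cap p → J p.1 p.2 = I p.1 p.2) →
      eval J s .base = eval J t .base) :
    ∀ C : Ctx, (∀ p, C.captures p → Cap p) →
      ∀ J : Interp, (∀ p, ¬ Cap p → J p.1 p.2 = I p.1 p.2) →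
      ∀ σ, eval J (C.fill s) σ = eval J (C.fill t) σ := by
  intro C
  induction C with
  | hole =>
      intro _ J hJ σ
      simp only [Ctx.fill]
      by_cases hσ : σ = Ty.base
      · subst hσ; exact key J hJ
      · rw [eval_wrong hs J σ hσ, eval_wrong ht J σ hσ]
  | lam n τ C ih =>
      intro hcap J hJ σ
      cases σ with
      | base => rfl
      | arrow σ₁ σ₂ =>
          simp only [Ctx.fill, eval_lam']
          by_cases hc : σ₁ = τ
          · subst hc
            rw [dif_pos rfl, dif_pos rfl]
            funext a
            refine ih (fun p hp => hcap p (Or.inr hp)) (J.update n σ₁ (Ty.semCast rfl a)) ?_ σ₂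
            intro p hp
            have hpn : p ≠ (n, σ₁) := fun he => hp (hcap p (he ▸ Or.inl rfl))
            rw [Interp.update_ne _ (fun hc2 => hpn (Prod.ext hc2.1 hc2.2))]
            exact hJ p hp
          · rw [dif_neg hc, dif_neg hc]
  | appL C u ih =>
      intro hcap J hJ σ
      simp only [Ctx.fill, eval_app']
      cases typeOf u with
      | none => rfl
      | some τ => simp only [ih hcap J hJ (.arrow τ σ)]
  | appR u C ih =>
      intro hcap J hJ σ
      simp only [Ctx.fill, eval_app']
      rw [ctx_fill_typeOf C ((typeOf_of_hasTy hs).trans (typeOf_of_hasTy ht).symm)]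
      cases typeOf (C.fill t) with
      | none => rfl
      | some τ => simp only [ih hcap J hJ τ]

end BR
/-- Soundness: every deducible sequent is valid. -/
theorem soundness (A : Finset Tm) (s : Tm) (h : Ded A s) : ValidSeq A s := by
  have main : ∀ A s, Ded A s →
      (∀ t ∈ A, HasTy t .base) ∧ HasTy s .base ∧ ValidSeq A s := by
    intro A s h
    induction h with
    | @triv A s hA hs =>
        exact ⟨fun t htA => (Finset.mem_insert.1 htA).elim (fun he => he ▸ hs) (hA t),
          hs, fun I hI => hI _ (Finset.mem_insert_self _ _)⟩
    | @weak A s t hs _ ih =>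
        refine ⟨fun u huA => (Finset.mem_insert.1 huA).elim (fun he => he ▸ hs) (ih.1 u), ih.2.1, ?_⟩
        intro I hI
        exact ih.2.2 I (fun u hu => hI u (Finset.mem_insert_of_mem hu))
    | @ded A s t _ ih =>
        have hsb : HasTy s .base := ih.1 s (Finset.mem_insert_self _ _)
        have hA : ∀ u ∈ A, HasTy u .base := fun u hu => ih.1 u (Finset.mem_insert_of_mem hu)
        refine ⟨hA, hasTy_imp hsb ih.2.1, ?_⟩
        intro I hI
        show eval I (impTm s t) .base = true
        rw [eval_imp (typeOf_of_hasTy hsb) (typeOf_of_hasTy ih.2.1)]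
        cases hcs : eval I s .base with
        | false => rfl
        | true =>
            have hst : Satisfies I t := ih.2.2 I (fun u hu => (Finset.mem_insert.1 hu).elim
              (fun he => he ▸ (show Satisfies I s from hcs)) (hI u))
            rw [hst]
            rfl
    | @mp A s t _ _ ih1 ih2 =>
        have hti := hasTy_imp_inv ih1.2.1
        refine ⟨ih1.1, hti.2, ?_⟩
        intro I hI
        have hv1 := ih1.2.2 I hI
        have hv2 := ih2.2.2 I hI
        show eval I t .base = true
        rw [Satisfies, eval_imp (typeOf_of_hasTy hti.1) (typeOf_of_hasTy hti.2)] at hv1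
        rw [Satisfies] at hv2
        rw [hv2] at hv1
        exact hv1
    | @dn A s _ ih =>
        have h1 := (hasTy_imp_inv ih.2.1).1
        have hsb := (hasTy_imp_inv h1).1
        refine ⟨ih.1, hsb, ?_⟩
        intro I hI
        have hv := ih.2.2 I hI
        rw [Satisfies] at hv
        simp only [negTm] at hv
        rw [eval_imp (typeOf_imp (typeOf_of_hasTy hsb) typeOf_bot) typeOf_bot,
          eval_imp (typeOf_of_hasTy hsb) typeOf_bot, eval_bot] at hv
        show eval I s .base = true
        cases hcs : eval I s .base with
        | false => rw [hcs] at hv; simp at hv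
        | true => rfl
    | @lam A s t _ heq hty ih =>
        refine ⟨ih.1, hty, ?_⟩
        intro I hI
        show eval I t .base = true
        rw [← (lamEq_sound heq).2 I .base]
        exact ih.2.2 I hI
    | @br A s' t' C hadm _ _ hty ih1 ih2 =>
        have hst := hasTy_equiv_inv ih1.2.1
        refine ⟨ih1.1, hty, ?_⟩
        intro I hI
        have key : ∀ J : Interp, (∀ p, ¬ C.captures p → J p.1 p.2 = I p.1 p.2) →
            eval J s' .base = eval J t' .base := by
          intro J hJ
          have hJA : ∀ u ∈ A, Satisfies J u := by
            intro u hu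
            have he : eval J u .base = eval I u .base := by
              apply eval_congr
              intro p hp
              exact hJ p (hadm p (Finset.mem_biUnion.2 ⟨u, hu, hp⟩))
            rw [Satisfies, he]
            exact hI u hu
          exact eval_equiv hst.1 hst.2 (ih1.2.2 J hJA)
        have hfin := br_aux hst.1 hst.2 C.captures I key C (fun p hp => hp)
          I (fun p _ => rfl) .base
        show eval I (C.fill t') .base = true
        rw [← hfin]
        exact ih2.2.2 I hI
  exact (main A s h).2.2

end PTT
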